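/- Let d ≥ 2, let k > 1, and let α be a real number with −1/(kd) ≤ α ≤ 0. Then (1+dα)²/(2d) ≥ (k−1)²/(2k²d), and consequently the ellipsoid volume ratio after a cut of depth α satisfies (d(1+α)/(d−1))^{(d−1)/2} · (d(1−α)/(d+1))^{(d+1)/2} ≤ exp(−(k−1)²/(2k²d)). -/

import Mathlib

open Real

/-- Volume shrinkage after a shallow cut of depth `α ∈ [-1/(kd), 0]`. -/
theorem stmt2 (d : ℕ) (hd : 2 ≤ d) (k : ℝ) (hk : 1 < k) (α : ℝ)
    (hα₁ : -(1 / (k * (d : ℝ))) ≤ α) (hα₂ : α ≤ 0) :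
    (1 + (d : ℝ) * α) ^ 2 / (2 * (d : ℝ)) ≥ (k - 1) ^ 2 / (2 * k ^ 2 * (d : ℝ)) ∧
    ((d : ℝ) * (1 + α) / ((d : ℝ) - 1)) ^ (((d : ℝ) - 1) / 2)
      * ((d : ℝ) * (1 - α) / ((d : ℝ) + 1)) ^ (((d : ℝ) + 1) / 2)
      ≤ Real.exp (-((k - 1) ^ 2 / (2 * k ^ 2 * (d : ℝ)))) := by
  have hD : (2:ℝ) ≤ (d:ℝ) := by exact_mod_cast hd
  set D : ℝ := (d:ℝ) with hDdef
  have hD1 : (1:ℝ) < D := by linarith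
  have hD0 : (0:ℝ) < D := by linarith
  have hDm1 : (0:ℝ) < D - 1 := by linarith
  have hDp1 : (0:ℝ) < D + 1 := by linarith
  have hk0 : (0:ℝ) < k := by linarith
  set β : ℝ := 1 + D * α with hβdef
  -- bounds on β
  have hβ1 : (k - 1) / k ≤ β := by
    have h1 : D * (-(1 / (k * D))) ≤ D * α := by
      exact mul_le_mul_of_nonneg_left hα₁ hD0.le
    have h2 : D * (-(1 / (k * D))) = -(1/k) := by
      field_simp
    rw [h2] at h1
    have h3 : (k - 1) / k = 1 - 1/k := by field_simp
    rw [h3, hβdef]; linarith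
  have hβ2 : β ≤ 1 := by
    have : D * α ≤ 0 := mul_nonpos_of_nonneg_of_nonpos hD0.le hα₂
    rw [hβdef]; linarith
  have hβ0 : 0 ≤ β := by
    have : 0 ≤ (k - 1) / k := div_nonneg (by linarith) hk0.le
    linarith
  -- Part 1
  have part1 : (k - 1) ^ 2 / (2 * k ^ 2 * D) ≤ β ^ 2 / (2 * D) := by
    have hsq : ((k - 1) / k) ^ 2 ≤ β ^ 2 :=
      pow_le_pow_left₀ (div_nonneg (by linarith) hk0.le) hβ1 2
    have hsq' : (k - 1) ^ 2 ≤ β ^ 2 * k ^ 2 := by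
      rw [div_pow, div_le_iff₀ (by positivity)] at hsq
      linarith
    rw [div_le_div_iff₀ (by positivity) (by positivity)]
    nlinarith [hD0, hsq']
  refine ⟨part1, ?_⟩
  -- Part 2
  set g : ℝ → ℝ := fun y =>
    (D - 1) / 2 * Real.log (1 + y / (D - 1)) + (D + 1) / 2 * Real.log (1 - y / (D + 1))
      + y ^ 2 / (2 * D) with hgdef
  set v : ℝ → ℝ := fun y => -(y * (1 - y) ^ 2) / (D * ((D - 1 + y) * (D + 1 - y))) with hvdef
  have hderiv : ∀ x ∈ Set.Icc (0:ℝ) 1, HasDerivAt g (v x) x := by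
    intro x hx
    obtain ⟨hx0, hx1⟩ := hx
    have hpos1 : 0 < 1 + x / (D - 1) := by positivity
    have hpos2 : 0 < 1 - x / (D + 1) := by
      have : x / (D + 1) < 1 := by
        rw [div_lt_one hDp1]; linarith
      linarith
    have h1 : HasDerivAt (fun y : ℝ => 1 + y / (D - 1)) (1 / (D - 1)) x := by
      simpa using ((hasDerivAt_id x).div_const (D - 1)).const_add 1
    have h2 : HasDerivAt (fun y : ℝ => 1 - y / (D + 1)) (-(1 / (D + 1))) x := by
      simpa using ((hasDerivAt_id x).div_const (D + 1)).const_sub 1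
    have h1l := (h1.log hpos1.ne').const_mul ((D - 1) / 2)
    have h2l := (h2.log hpos2.ne').const_mul ((D + 1) / 2)
    have h3 : HasDerivAt (fun y : ℝ => y ^ 2 / (2 * D)) ((2 : ℕ) * x ^ 1 / (2 * D)) x :=
      (hasDerivAt_pow 2 x).div_const (2 * D)
    have htot := (h1l.add h2l).add h3
    have hval : (D - 1) / 2 * (1 / (D - 1) / (1 + x / (D - 1)))
        + (D + 1) / 2 * (-(1 / (D + 1)) / (1 - x / (D + 1)))
        + (2 : ℕ) * x ^ 1 / (2 * D) = v x := by
      rw [hvdef]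
      have hne1 : D - 1 + x ≠ 0 := by positivity
      have hne2 : D + 1 - x ≠ 0 := by
        have : 0 < D + 1 - x := by linarith
        exact this.ne'
      field_simp
      ring
    rw [hval] at htot
    exact htot
  have hanti : AntitoneOn g (Set.Icc (0:ℝ) 1) := by
    apply antitoneOn_of_hasDerivWithinAt_nonpos (convex_Icc 0 1)
    · intro x hx
      exact ((hderiv x hx).continuousAt).continuousWithinAt
    · intro x hx
      rw [interior_Icc] at hx
      exact ((hderiv x ⟨hx.1.le, hx.2.le⟩).hasDerivWithinAt)
    · intro x hx
      rw [interior_Icc] at hx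
      rw [hvdef]
      apply div_nonpos_of_nonpos_of_nonneg
      · have : 0 ≤ x * (1 - x) ^ 2 := mul_nonneg hx.1.le (sq_nonneg _)
        linarith
      · have h1 : 0 < D - 1 + x := by linarith [hx.1]
        have h2 : 0 < D + 1 - x := by linarith [hx.2]
        positivity
  have hg0 : g 0 = 0 := by
    simp [hgdef]
  have hgβ : g β ≤ 0 := by
    rw [← hg0]
    exact hanti (Set.mem_Icc.mpr ⟨le_refl 0, zero_le_one⟩) (Set.mem_Icc.mpr ⟨hβ0, hβ2⟩) hβ0
  -- rewrite the bases
  have ha : D * (1 + α) / (D - 1) = 1 + β / (D - 1) := by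
    rw [hβdef]; field_simp; ring
  have hb : D * (1 - α) / (D + 1) = 1 - β / (D + 1) := by
    rw [hβdef]; field_simp; ring
  have hapos : 0 < 1 + β / (D - 1) := by
    have : 0 ≤ β / (D - 1) := div_nonneg hβ0 hDm1.le
    linarith
  have hbpos : 0 < 1 - β / (D + 1) := by
    have : β / (D + 1) < 1 := by rw [div_lt_one hDp1]; linarith
    linarith
  rw [ha, hb]
  have hprodpos : 0 < (1 + β / (D - 1)) ^ ((D - 1) / 2) * (1 - β / (D + 1)) ^ ((D + 1) / 2) := by
    exact mul_pos (Real.rpow_pos_of_pos hapos _) (Real.rpow_pos_of_pos hbpos _)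
  rw [← Real.log_le_iff_le_exp hprodpos]
  rw [Real.log_mul (Real.rpow_pos_of_pos hapos _).ne' (Real.rpow_pos_of_pos hbpos _).ne',
    Real.log_rpow hapos, Real.log_rpow hbpos]
  have key : (D - 1) / 2 * Real.log (1 + β / (D - 1))
      + (D + 1) / 2 * Real.log (1 - β / (D + 1)) ≤ -(β ^ 2 / (2 * D)) := by
    have := hgβ
    rw [hgdef] at this
    simp only at this
    linarith
  calc (D - 1) / 2 * Real.log (1 + β / (D - 1)) + (D + 1) / 2 * Real.log (1 - β / (D + 1))
      ≤ -(β ^ 2 / (2 * D)) := key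
    _ ≤ -((k - 1) ^ 2 / (2 * k ^ 2 * D)) := by linarith
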